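/- arXiv:1010.2253 — 5 statements merged into one kernel-verified Lean document; each statement's English description precedes it below -/
import Mathlib

section
/- There is no 2-dimensional flag simplicial complex with f-vector (1,7,16,11); that is, no graph G on 7 vertices with 16 edges, exactly 11 triangles, and no clique of size 4. -/
open SimpleGraph Finset

lemma clique_card_iso {α β : Type*} [Fintype α] [Fintype β] [DecidableEq α] [DecidableEq β]
    {G : SimpleGraph α} {H : SimpleGraph β} [DecidableRel G.Adj] [DecidableRel H.Adj]
    (f : G ≃g H) (n : ℕ) : (G.cliqueFinset n).card = (H.cliqueFinset n).card := by
  apply Finset.card_bij (fun s _ => s.map f.toEmbedding.toEmbedding)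
  · intro s hs
    rw [mem_cliqueFinset_iff] at hs ⊢
    obtain ⟨hc, hcard⟩ := hs
    refine ⟨?_, by simp [hcard]⟩
    intro a ha b hb hab
    simp only [coe_map, Set.mem_image, mem_coe] at ha hb
    obtain ⟨x, hx, rfl⟩ := ha
    obtain ⟨y, hy, rfl⟩ := hb
    show H.Adj (f x) (f y)
    rw [f.map_adj_iff]
    exact hc hx hy (fun h => hab (by simp [h]))
  · intro s hs t ht h
    exact Finset.map_injective _ h
  · intro t ht
    refine ⟨t.map f.symm.toEmbedding.toEmbedding, ?_, ?_⟩
    · rw [mem_cliqueFinset_iff] at ht ⊢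
      obtain ⟨hc, hcard⟩ := ht
      refine ⟨?_, by simp [hcard]⟩
      intro a ha b hb hab
      simp only [coe_map, Set.mem_image, mem_coe] at ha hb
      obtain ⟨x, hx, rfl⟩ := ha
      obtain ⟨y, hy, rfl⟩ := hb
      show G.Adj (f.symm x) (f.symm y)
      rw [f.symm.map_adj_iff]
      exact hc hx hy (fun h => hab (by simp [h]))
    · ext x
      simp only [Finset.mem_map, RelIso.coe_toRelEmbedding]
      constructor
      · rintro ⟨y, ⟨z, hz, rfl⟩, rfl⟩
        simpa using hz
      · intro hx
        exact ⟨f.symm x, ⟨x, hx, rfl⟩, by simp⟩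

/-- There is no 2-dimensional flag simplicial complex with f-vector `(1,7,16,11)`:
no graph on 7 vertices with 16 edges, exactly 11 triangles, and no clique of size 4. -/
theorem no_flag_complex_with_f_vector_1_7_16_11
    (G : SimpleGraph (Fin 7)) [DecidableRel G.Adj] :
    ¬ (G.edgeFinset.card = 16 ∧ (G.cliqueFinset 3).card = 11 ∧ G.CliqueFree 4) := by
  rintro ⟨he, ht, hcf⟩
  have hT : (turanGraph 7 3).IsTuranMaximal 3 := isTuranMaximal_turanGraph (by norm_num)
  have hTe : ((turanGraph 7 3).edgeFinset).card = 16 := by decide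
  have hG : G.IsTuranMaximal 3 := by
    refine ⟨hcf, fun H _ hH => ?_⟩
    calc #H.edgeFinset ≤ #(turanGraph 7 3).edgeFinset := hT.2 hH
      _ = #G.edgeFinset := by rw [hTe, he]
  obtain ⟨f⟩ := hG.nonempty_iso_turanGraph
  rw [Fintype.card_fin] at f
  have := clique_card_iso f 3
  rw [ht] at this
  have hTt : ((turanGraph 7 3).cliqueFinset 3).card = 12 := by decide
  omega
end

section
/- Any K_4-free graph on 7 vertices with 16 edges is isomorphic to the Turán graph T(7,3). -/
/-- The part assignment for the Turán graph `T(7,3)`: parts of sizes 3, 2, 2. -/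
def turanPart (v : Fin 7) : Fin 3 :=
  if (v : ℕ) < 3 then 0 else if (v : ℕ) < 5 then 1 else 2

/-- The Turán graph `T(7,3)`: the complete 3-partite graph with parts of sizes 3, 2, 2. -/
def turan73 : SimpleGraph (Fin 7) where
  Adj u v := turanPart u ≠ turanPart v
  symm := ⟨fun _ _ h => h.symm⟩
  loopless := ⟨fun _ h => h rfl⟩

open SimpleGraph

def permE : Fin 7 ≃ Fin 7 :=
  ⟨![0, 3, 5, 1, 4, 6, 2], ![0, 3, 6, 1, 4, 2, 5], by decide, by decide⟩

instance : DecidableRel turan73.Adj :=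
  fun a b => decidable_of_iff (turanPart a ≠ turanPart b) Iff.rfl

def isoTT : turanGraph 7 3 ≃g turan73 where
  toEquiv := permE
  map_rel_iff' := @fun a b => by revert a b; decide

/-- Any `K₄`-free graph on 7 vertices with 16 edges is isomorphic to the Turán
graph `T(7,3)`. -/
theorem k4_free_16_edges_iso_turan (G : SimpleGraph (Fin 7)) [DecidableRel G.Adj]
    (hfree : G.CliqueFree 4) (hedges : G.edgeFinset.card = 16) :
    Nonempty (G ≃g turan73) := by
  have ht : (turanGraph 7 3).IsTuranMaximal 3 := isTuranMaximal_turanGraph (by norm_num)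
  have hcard : (turanGraph 7 3).edgeFinset.card = 16 := by decide
  have hmax : G.IsTuranMaximal 3 := by
    refine ⟨hfree, fun H _ hH => ?_⟩
    have := ht.2 (G' := H) hH
    omega
  obtain ⟨f⟩ := hmax.nonempty_iso_turanGraph
  exact ⟨isoTT.comp f⟩
end

section
/- If G is a graph whose pendant edges form a perfect matching, then every maximal independent set of G has size equal to the number of pendant edges of G, i.e., half the number of vertices of G. -/
variable {V : Type*} [Fintype V] [DecidableEq V]

/-- A set of vertices is independent if no two of its elements are adjacent. -/
def SimpleGraph.IsIndepSet' (G : SimpleGraph V) (S : Set V) : Prop :=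
  S.Pairwise fun u v => ¬ G.Adj u v

/-- The set of pendant edges of `G`: edges incident to a vertex of degree 1. -/
def pendantEdges (G : SimpleGraph V) [DecidableRel G.Adj] : Set (Sym2 V) :=
  {e | e ∈ G.edgeSet ∧ ∃ v ∈ e, G.degree v = 1}

/-- If the pendant edges of `G` form a perfect matching (every vertex lies in exactly
one pendant edge), then every maximal independent set of `G` has size equal to the
number of pendant edges, i.e., half the number of vertices. -/
theorem maximal_indep_card_of_pendant_perfect_matching
    (G : SimpleGraph V) [DecidableRel G.Adj]
    (hpm : ∀ v : V, ∃! e, e ∈ pendantEdges G ∧ v ∈ e)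
    (S : Set V) (hS : G.IsIndepSet' S)
    (hmax : ∀ T : Set V, G.IsIndepSet' T → S ⊆ T → S = T) :
    S.ncard = (pendantEdges G).ncard ∧ 2 * S.ncard = Fintype.card V := by
  classical
  choose f hf using hpm
  have hfmem : ∀ v, f v ∈ pendantEdges G := fun v => (hf v).1.1
  have hvf : ∀ v, v ∈ f v := fun v => (hf v).1.2
  have huniq : ∀ v e, e ∈ pendantEdges G → v ∈ e → f v = e :=
    fun v e he hv => ((hf v).2 e ⟨he, hv⟩).symm
  have hrep : ∀ e : Sym2 V, ∃ a b, e = s(a, b) := by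
    intro e
    induction e using Sym2.ind with
    | _ a b => exact ⟨a, b, rfl⟩
  -- every pendant edge meets S
  have hsurj : ∀ e ∈ pendantEdges G, ∃ v ∈ S, v ∈ e := by
    intro e he
    by_contra hcon
    push_neg at hcon
    obtain ⟨hedge, w, hwe, hdeg⟩ := he
    have hone : ∀ x y, G.Adj w x → G.Adj w y → x = y := by
      intro x y hx hy
      have hcard : (G.neighborFinset w).card ≤ 1 := by
        rw [G.card_neighborFinset_eq_degree, hdeg]
      exact Finset.card_le_one.1 hcard x ((G.mem_neighborFinset w x).2 hx)
        y ((G.mem_neighborFinset w y).2 hy)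
    obtain ⟨a, b, rfl⟩ := hrep e
    have hadj : G.Adj a b := hedge
    have hindep : G.IsIndepSet' (insert w S) := by
      rw [SimpleGraph.IsIndepSet', (haveI : Std.Symm (fun u v : V => ¬ G.Adj u v) :=
        ⟨fun u v (h : ¬ G.Adj u v) h' => h h'.symm⟩; Set.pairwise_insert_of_symm)]
      refine ⟨hS, fun s hs _ hsadj => ?_⟩
      rcases Sym2.mem_iff.1 hwe with hwa | hwb
      · have hsb : s = b := hone s b hsadj (hwa ▸ hadj)
        exact hcon s hs (by rw [hsb]; simp)
      · have hsa : s = a := hone s a hsadj (hwb ▸ hadj.symm)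
        exact hcon s hs (by rw [hsa]; simp)
    have hSeq := hmax _ hindep (Set.subset_insert w S)
    exact hcon w (hSeq ▸ Set.mem_insert w S) hwe
  -- injectivity of f on S
  have hinj : Set.InjOn f S := by
    intro u hu v hv hfe
    by_contra hne
    have hedge : f u ∈ G.edgeSet := (hfmem u).1
    have hvu : v ∈ f u := hfe ▸ hvf v
    have huu : u ∈ f u := hvf u
    obtain ⟨a, b, hab⟩ := hrep (f u)
    rw [hab] at hedge hvu huu
    have hadj : G.Adj a b := hedge
    rcases Sym2.mem_iff.1 huu with rfl | rfl <;> rcases Sym2.mem_iff.1 hvu with rfl | rfl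
    · exact hne rfl
    · exact hS hu hv hne hadj
    · exact hS hu hv hne hadj.symm
    · exact hne rfl
  have himg : f '' S = pendantEdges G := by
    apply Set.Subset.antisymm
    · rintro e ⟨v, -, rfl⟩; exact hfmem v
    · intro e he
      obtain ⟨v, hvS, hve⟩ := hsurj e he
      exact ⟨v, hvS, huniq v e he hve⟩
  have h1 : S.ncard = (pendantEdges G).ncard := by
    rw [← himg, Set.ncard_image_of_injOn hinj]
  refine ⟨h1, ?_⟩
  rw [h1]
  have hP : Fintype.card V = ∑ e ∈ (pendantEdges G).toFinset,
      (Finset.univ.filter fun v => f v = e).card := by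
    rw [← Finset.card_univ]
    exact Finset.card_eq_sum_card_fiberwise (fun v _ => Set.mem_toFinset.2 (hfmem v))
  have hfib : ∀ e ∈ (pendantEdges G).toFinset,
      (Finset.univ.filter fun v => f v = e).card = 2 := by
    intro e he
    rw [Set.mem_toFinset] at he
    obtain ⟨a, b, rfl⟩ := hrep e
    have hadj : G.Adj a b := he.1
    have hset : (Finset.univ.filter fun v => f v = s(a, b)) = {a, b} := by
      ext x
      simp only [Finset.mem_filter, Finset.mem_univ, true_and, Finset.mem_insert,
        Finset.mem_singleton]
      constructor
      · intro hx
        have hxm := hvf x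
        rw [hx] at hxm
        exact Sym2.mem_iff.1 hxm
      · rintro (rfl | rfl)
        · exact huniq x _ he (Sym2.mem_mk_left _ _)
        · exact huniq x _ he (Sym2.mem_mk_right _ _)
    rw [hset, Finset.card_pair hadj.ne]
  rw [Finset.sum_congr rfl hfib, Finset.sum_const, smul_eq_mul, mul_comm,
    ← Set.ncard_eq_toFinset_card'] at hP
  exact hP.symm
end

section
/- If G is a graph with girth at least 8 (every cycle of G has length at least 8) and the pendant edges of G form a perfect matching, then G is well-covered: all maximal independent sets of G have the same cardinality. -/
variable {V : Type*} [Fintype V] [DecidableEq V]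

/-- A set of vertices is independent if no two of its elements are adjacent. -/
def SimpleGraph.IsIndepSetV (G : SimpleGraph V) (S : Set V) : Prop :=
  S.Pairwise fun u v => ¬ G.Adj u v

lemma aux_ncard_eq (G : SimpleGraph V) [DecidableRel G.Adj]
    (hpm : ∀ v : V, ∃! e, e ∈ pendantEdges G ∧ v ∈ e)
    (S : Set V)
    (hS : G.IsIndepSetV S) (hSmax : ∀ S', G.IsIndepSetV S' → S ⊆ S' → S = S') :
    S.ncard = (pendantEdges G).ncard := by
  set f : V → Sym2 V := fun x => (hpm x).choose with hf
  have hfspec : ∀ x, f x ∈ pendantEdges G ∧ x ∈ f x := fun x => (hpm x).choose_spec.1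
  have hfuniq : ∀ x e, e ∈ pendantEdges G → x ∈ e → f x = e := by
    intro x e he hx
    exact (((hpm x).choose_spec.2 e ⟨he, hx⟩)).symm ▸ rfl
  -- injectivity on S
  have hinj : Set.InjOn f S := by
    intro x hx y hy hxy
    by_contra hne
    have hx' : x ∈ f x := (hfspec x).2
    have hy' : y ∈ f x := hxy ▸ (hfspec y).2
    have hedge : f x ∈ G.edgeSet := (hfspec x).1.1
    have : f x = s(x, y) := ((Sym2.mem_and_mem_iff hne).mp ⟨hx', hy'⟩)
    have hadj : G.Adj x y := by
      rw [this] at hedge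
      exact hedge
    exact hS hx hy hne hadj
  -- surjectivity
  have hsurj : ∀ e ∈ pendantEdges G, ∃ x ∈ S, f x = e := by
    intro e he
    obtain ⟨hedge, v, hv, hdeg⟩ := he
    obtain ⟨u, rfl⟩ := Sym2.mem_iff_exists.mp hv
    have hadj : G.Adj v u := hedge
    -- v's unique neighbor is u
    have huniq : ∀ w, G.Adj v w → w = u := by
      obtain ⟨a, ha⟩ := Finset.card_eq_one.mp hdeg
      intro w hw
      have h1 : w ∈ G.neighborFinset v := by simpa using hw
      have h2 : u ∈ G.neighborFinset v := by simpa using hadj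
      rw [ha, Finset.mem_singleton] at h1 h2
      rw [h1, h2]
    by_cases hu : u ∈ S
    · exact ⟨u, hu, hfuniq u _ ⟨hedge, v, hv, hdeg⟩ (Sym2.mem_mk_right v u)⟩
    · have hvS : v ∈ S := by
        by_contra hvS
        have hindep : G.IsIndepSetV (insert v S) := by
          intro a ha b hb hab
          rcases ha with rfl | ha
          · rcases hb with rfl | hb
            · exact absurd rfl hab
            · intro hadj'
              exact hu ((huniq b hadj') ▸ hb)
          · rcases hb with rfl | hb
            · intro hadj'
              exact hu ((huniq a hadj'.symm) ▸ ha)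
            · exact hS ha hb hab
        have := hSmax _ hindep (Set.subset_insert v S)
        exact hvS (this ▸ Set.mem_insert v S)
      exact ⟨v, hvS, hfuniq v _ ⟨hedge, v, hv, hdeg⟩ hv⟩
  have himg : f '' S = pendantEdges G := by
    apply Set.Subset.antisymm
    · rintro _ ⟨x, _, rfl⟩
      exact (hfspec x).1
    · intro e he
      obtain ⟨x, hx, hfx⟩ := hsurj e he
      exact ⟨x, hx, hfx⟩
  rw [← himg, Set.ncard_image_of_injOn hinj]

/-- If `G` has girth at least 8 and its pendant edges form a perfect matching, then
`G` is well-covered: all maximal independent sets have the same cardinality. -/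
theorem wellCovered_of_girth_ge_eight_of_pendant_matching
    (G : SimpleGraph V) [DecidableRel G.Adj]
    (hgirth : 8 ≤ G.egirth)
    (hpm : ∀ v : V, ∃! e, e ∈ pendantEdges G ∧ v ∈ e)
    (S T : Set V)
    (hS : G.IsIndepSetV S) (hSmax : ∀ S', G.IsIndepSetV S' → S ⊆ S' → S = S')
    (hT : G.IsIndepSetV T) (hTmax : ∀ T', G.IsIndepSetV T' → T ⊆ T' → T = T') :
    S.ncard = T.ncard := by
  rw [aux_ncard_eq G hpm S hS hSmax, aux_ncard_eq G hpm T hT hTmax]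
end

section
/- If G is a connected well-covered graph with girth at least 8 and at least 2 vertices, then the pendant edges of G form a perfect matching of G. -/
variable {V : Type*} [Fintype V] [DecidableEq V]

namespace FH

open SimpleGraph

section Cycles
variable {W : Type*} {G : SimpleGraph W}

lemma noC3 (hg : 8 ≤ G.egirth) {a b c : W}
    (h1 : G.Adj a b) (h2 : G.Adj b c) (h3 : G.Adj c a)
    (n2 : a ≠ c) : False := by
  rw [SimpleGraph.le_egirth] at hg
  have hw : (Walk.cons h1 (.cons h2 (.cons h3 .nil))).IsCycle := by
    have n1 := h1.ne; have n3 := h2.ne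
    simp [Walk.isCycle_def, Walk.isTrail_def]
    tauto
  have := hg a _ hw
  revert this; simp; norm_num

lemma noC4 (hg : 8 ≤ G.egirth) {a b c d : W}
    (h1 : G.Adj a b) (h2 : G.Adj b c) (h3 : G.Adj c d) (h4 : G.Adj d a)
    (n2 : a ≠ c) (n5 : b ≠ d) : False := by
  rw [SimpleGraph.le_egirth] at hg
  have hw : (Walk.cons h1 (.cons h2 (.cons h3 (.cons h4 .nil)))).IsCycle := by
    have := h1.ne; have := h2.ne; have := h3.ne; have := h4.ne
    simp [Walk.isCycle_def, Walk.isTrail_def]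
    tauto
  have := hg a _ hw
  revert this; simp; norm_num

lemma noC5 (hg : 8 ≤ G.egirth) {a b c d e : W}
    (h1 : G.Adj a b) (h2 : G.Adj b c) (h3 : G.Adj c d) (h4 : G.Adj d e) (h5 : G.Adj e a)
    (n2 : a ≠ c) (n3 : a ≠ d) (n5 : b ≠ d) (n6 : b ≠ e) (n8 : c ≠ e) : False := by
  rw [SimpleGraph.le_egirth] at hg
  have hw : (Walk.cons h1 (.cons h2 (.cons h3 (.cons h4 (.cons h5 .nil))))).IsCycle := by
    have := h1.ne; have := h2.ne; have := h3.ne; have := h4.ne; have := h5.ne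
    simp [Walk.isCycle_def, Walk.isTrail_def]
    tauto
  have := hg a _ hw
  revert this; simp; norm_num

lemma noC6 (hg : 8 ≤ G.egirth) {a b c d e f : W}
    (h1 : G.Adj a b) (h2 : G.Adj b c) (h3 : G.Adj c d) (h4 : G.Adj d e) (h5 : G.Adj e f)
    (h6 : G.Adj f a)
    (n2 : a ≠ c) (n3 : a ≠ d) (n4 : a ≠ e) (n6 : b ≠ d) (n7 : b ≠ e) (n8 : b ≠ f)
    (n10 : c ≠ e) (n11 : c ≠ f) (n13 : d ≠ f) : False := by
  rw [SimpleGraph.le_egirth] at hg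
  have hw : (Walk.cons h1 (.cons h2 (.cons h3 (.cons h4 (.cons h5 (.cons h6 .nil)))))).IsCycle := by
    have := h1.ne; have := h2.ne; have := h3.ne; have := h4.ne; have := h5.ne; have := h6.ne
    simp [Walk.isCycle_def, Walk.isTrail_def]
    tauto
  have := hg a _ hw
  revert this; simp; norm_num

lemma noC7 (hg : 8 ≤ G.egirth) {a b c d e f g : W}
    (h1 : G.Adj a b) (h2 : G.Adj b c) (h3 : G.Adj c d) (h4 : G.Adj d e)
    (h5 : G.Adj e f) (h6 : G.Adj f g) (h7 : G.Adj g a)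
    (n2 : a ≠ c) (n3 : a ≠ d) (n4 : a ≠ e) (n5 : a ≠ f)
    (n8 : b ≠ d) (n9 : b ≠ e) (n10 : b ≠ f) (n11 : b ≠ g)
    (n13 : c ≠ e) (n14 : c ≠ f) (n15 : c ≠ g)
    (n17 : d ≠ f) (n18 : d ≠ g)
    (n20 : e ≠ g) : False := by
  rw [SimpleGraph.le_egirth] at hg
  have hw : (Walk.cons h1 (.cons h2 (.cons h3 (.cons h4 (.cons h5 (.cons h6 (.cons h7 .nil))))))).IsCycle := by
    have := h1.ne; have := h2.ne; have := h3.ne; have := h4.ne; have := h5.ne; have := h6.ne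
    have := h7.ne
    simp [Walk.isCycle_def, Walk.isTrail_def]
    tauto
  have := hg a _ hw
  revert this; simp; norm_num

end Cycles

section MI
variable {W : Type*}

/-- A maximal independent set: independent and dominating. -/
def MaxIndep (G : SimpleGraph W) (S : Set W) : Prop :=
  G.IsIndepSet' S ∧ ∀ x ∉ S, ∃ m ∈ S, G.Adj m x

/-- Well-covered. -/
def WC (G : SimpleGraph W) : Prop :=
  ∀ S T : Set W, MaxIndep G S → MaxIndep G T → S.ncard = T.ncard

lemma MaxIndep.eqForm {G : SimpleGraph W} {S : Set W} (h : MaxIndep G S) :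
    ∀ S', G.IsIndepSet' S' → S ⊆ S' → S = S' := by
  intro S' hS' hsub
  refine Set.Subset.antisymm hsub fun x hx => ?_
  by_contra hxS
  obtain ⟨m, hm, hadj⟩ := h.2 x hxS
  exact hS' (hsub hm) hx (fun he => G.irrefl (he ▸ hadj)) hadj

lemma exists_maxIndep_superset [Fintype W] (G : SimpleGraph W) (I : Set W)
    (hI : G.IsIndepSet' I) : ∃ M : Set W, I ⊆ M ∧ MaxIndep G M := by
  classical
  have hne : (Finset.univ.filter
      (fun J : Finset W => G.IsIndepSet' ↑J ∧ I ⊆ ↑J)).Nonempty := by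
    refine ⟨I.toFinset, ?_⟩
    simp only [Finset.mem_filter, Finset.mem_univ, true_and, Set.coe_toFinset]
    exact ⟨hI, le_refl _⟩
  obtain ⟨J, hJmem, hJmax⟩ := Finset.exists_max_image _ Finset.card hne
  simp only [Finset.mem_filter, Finset.mem_univ, true_and] at hJmem
  refine ⟨↑J, hJmem.2, hJmem.1, fun x hx => ?_⟩
  by_contra hno
  push_neg at hno
  have hind : G.IsIndepSet' ↑(insert x J) := by
    intro a ha b hb hne'
    simp only [Finset.coe_insert, Set.mem_insert_iff, Finset.mem_coe] at ha hb
    rcases ha with rfl | ha <;> rcases hb with rfl | hb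
    · exact absurd rfl hne'
    · exact fun h => hno b hb h.symm
    · exact hno a ha
    · exact hJmem.1 ha hb hne'
  have hle := hJmax (insert x J) (by
    simp only [Finset.mem_filter, Finset.mem_univ, true_and]
    exact ⟨hind, hJmem.2.trans (by simp [Finset.subset_insert])⟩)
  rw [Finset.card_insert_of_notMem (by simpa using hx)] at hle
  omega

end MI


universe u

theorem key : ∀ (n : ℕ) (W : Type u) [Fintype W] (G : SimpleGraph W),
    Fintype.card W ≤ n → 8 ≤ G.egirth → WC G →
    ∀ v : W, 2 ≤ (G.neighborSet v).ncard →
    ∃ u, G.Adj v u ∧ (G.neighborSet u).ncard = 1 := by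
  intro n
  induction n with
  | zero =>
    intro W _ G hn _ _ v _
    exact absurd (Fintype.card_pos_iff.mpr ⟨v⟩) (by omega)
  | succ n ih =>
    intro W _ G hn hg hwc v hv
    by_contra hleaf
    push_neg at hleaf
    classical
    set L1 : Set W := G.neighborSet v with hL1def
    set L2 : Set W := {x | x ≠ v ∧ x ∉ L1 ∧ ∃ u ∈ L1, G.Adj u x} with hL2def
    set L3 : Set W := {x | x ≠ v ∧ x ∉ L1 ∧ x ∉ L2} with hL3def
    have htot : ∀ x : W, x = v ∨ x ∈ L1 ∨ x ∈ L2 ∨ x ∈ L3 := by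
      intro x
      by_cases h1 : x = v
      · exact Or.inl h1
      by_cases h2 : x ∈ L1
      · exact Or.inr (Or.inl h2)
      by_cases h3 : x ∈ L2
      · exact Or.inr (Or.inr (Or.inl h3))
      · exact Or.inr (Or.inr (Or.inr ⟨h1, h2, h3⟩))
    have hvL1 : v ∉ L1 := fun h => G.irrefl h
    have hvL2 : v ∉ L2 := fun h => h.1 rfl
    have hvL3 : v ∉ L3 := fun h => h.1 rfl
    have hL12 : ∀ x ∈ L1, x ∉ L2 := fun x hx h => h.2.1 hx
    have hL13 : ∀ x ∈ L1, x ∉ L3 := fun x hx h => h.2.1 hx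
    have hL23 : ∀ x ∈ L2, x ∉ L3 := fun x hx h => h.2.2 hx
    have nev1 : ∀ b ∈ L1, v ≠ b := fun b hb h => hvL1 (h ▸ hb)
    have nev2 : ∀ b ∈ L2, v ≠ b := fun b hb h => hvL2 (h ▸ hb)
    have nev3 : ∀ b ∈ L3, v ≠ b := fun b hb h => hvL3 (h ▸ hb)
    have ne12 : ∀ a ∈ L1, ∀ b ∈ L2, a ≠ b := fun a ha b hb h => hL12 a ha (h ▸ hb)
    have ne13 : ∀ a ∈ L1, ∀ b ∈ L3, a ≠ b := fun a ha b hb h => hL13 a ha (h ▸ hb)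
    have ne23 : ∀ a ∈ L2, ∀ b ∈ L3, a ≠ b := fun a ha b hb h => hL23 a ha (h ▸ hb)
    -- every vertex in L1 has ≥ 2 neighbors
    have hL1deg : ∀ u ∈ L1, 2 ≤ (G.neighborSet u).ncard := by
      intro u hu
      have h1 : 0 < (G.neighborSet u).ncard := by
        rw [Set.ncard_pos (Set.toFinite _)]
        exact ⟨v, G.adj_symm hu⟩
      have h2 := hleaf u hu
      omega
    -- girth facts
    have f_a : ∀ u ∈ L1, ∀ u' ∈ L1, ¬ G.Adj u u' := fun u hu u' hu' hadj =>
      noC3 hg hu hadj (G.adj_symm hu') (nev1 u' hu')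
    have f_vL2 : ∀ x ∈ L2, ¬ G.Adj v x := fun x hx hadj => hL12 x hadj hx
    have f_vL3 : ∀ x ∈ L3, ¬ G.Adj v x := fun x hx hadj => hL13 x hadj hx
    have f_L1L3 : ∀ u ∈ L1, ∀ x ∈ L3, ¬ G.Adj u x := fun u hu x hx hadj =>
      hx.2.2 ⟨hx.1, hx.2.1, u, hu, hadj⟩
    have hL2nbr : ∀ u ∈ L1, ∃ z ∈ L2, G.Adj u z := by
      intro u hu
      have h2 := hL1deg u hu
      have hns : ¬ (G.neighborSet u ⊆ {v}) := by
        intro hsub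
        have := Set.ncard_le_ncard hsub (Set.finite_singleton v)
        rw [Set.ncard_singleton] at this
        omega
      obtain ⟨z, hz, hzv⟩ := Set.not_subset.mp hns
      have hzL1 : z ∉ L1 := fun h => f_a u hu z h hz
      exact ⟨z, ⟨hzv, hzL1, u, hu, hz⟩, hz⟩
    have f_b : ∀ x ∈ L2, ∀ u ∈ L1, ∀ u' ∈ L1, G.Adj u x → G.Adj u' x → u = u' := by
      intro x hx u hu u' hu' h h'
      by_contra hne
      exact noC4 hg hu h (G.adj_symm h') (G.adj_symm hu') (nev2 x hx) hne
    have f_c : ∀ x ∈ L2, ∀ y ∈ L2, ¬ G.Adj x y := by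
      intro x hx y hy hadj
      obtain ⟨u, hu, hux⟩ := hx.2.2
      obtain ⟨u', hu', huy⟩ := hy.2.2
      by_cases he : u = u'
      · subst he
        exact noC3 hg hux hadj (G.adj_symm huy) (ne12 u hu y hy)
      · exact noC5 hg hu hux hadj (G.adj_symm huy) (G.adj_symm hu')
          (nev2 x hx) (nev2 y hy) (ne12 u hu y hy) he ((ne12 u' hu' x hx).symm)
    have f_f : ∀ x ∈ L3, ∀ z ∈ L2, ∀ z' ∈ L2, G.Adj z x → G.Adj z' x → z = z' := by
      intro x hx z hz z' hz' h h'
      by_contra hne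
      obtain ⟨u, hu, huz⟩ := hz.2.2
      obtain ⟨u', hu', huz'⟩ := hz'.2.2
      by_cases he : u = u'
      · subst he
        exact noC4 hg huz h (G.adj_symm h') (G.adj_symm huz') (ne13 u hu x hx) hne
      · exact noC6 hg hu huz h (G.adj_symm h') (G.adj_symm huz') (G.adj_symm hu')
          (nev2 z hz) (nev3 x hx) (nev2 z' hz') (ne13 u hu x hx) (ne12 u hu z' hz')
          he hne ((ne12 u' hu' z hz).symm) ((ne13 u' hu' x hx).symm)
    by_cases hcase : ∀ x ∈ L3, ∃ z ∈ L2, G.Adj z x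
    · -- CASE 1: every `L3` vertex has a neighbor in `L2`
      have f_e : ∀ x ∈ L3, ∀ y ∈ L3, ¬ G.Adj x y := by
        intro x hx y hy hadj
        obtain ⟨z, hz, hzx⟩ := hcase x hx
        obtain ⟨z', hz', hzy⟩ := hcase y hy
        by_cases hzz : z = z'
        · subst hzz
          exact noC3 hg hzx hadj (G.adj_symm hzy) (ne23 z hz y hy)
        · obtain ⟨u, hu, huz⟩ := hz.2.2
          obtain ⟨u', hu', huz'⟩ := hz'.2.2
          by_cases huu : u = u'
          · subst huu
            exact noC5 hg huz hzx hadj (G.adj_symm hzy) (G.adj_symm huz')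
              (ne13 u hu x hx) (ne13 u hu y hy) (ne23 z hz y hy) hzz
              ((ne23 z' hz' x hx).symm)
          · exact noC7 hg hu huz hzx hadj (G.adj_symm hzy) (G.adj_symm huz') (G.adj_symm hu')
              (nev2 z hz) (nev3 x hx) (nev3 y hy) (nev2 z' hz')
              (ne13 u hu x hx) (ne13 u hu y hy) (ne12 u hu z' hz') huu
              (ne23 z hz y hy) hzz ((ne12 u' hu' z hz).symm)
              ((ne23 z' hz' x hx).symm) ((ne13 u' hu' x hx).symm)
              ((ne13 u' hu' y hy).symm)
      -- Finset versions of the levels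
      set l1 : Finset W := L1.toFinset with hl1def
      set l2 : Finset W := L2.toFinset with hl2def
      set l3 : Finset W := L3.toFinset with hl3def
      have ml1 : ∀ x, x ∈ l1 ↔ x ∈ L1 := fun x => Set.mem_toFinset
      have ml2 : ∀ x, x ∈ l2 ↔ x ∈ L2 := fun x => Set.mem_toFinset
      have ml3 : ∀ x, x ∈ l3 ↔ x ∈ L3 := fun x => Set.mem_toFinset
      set C : W → Finset W := fun u => l2.filter (fun z => G.Adj u z) with hCdef
      set Tt : W → Finset W := fun u => l3.filter (fun x => ∃ z ∈ C u, G.Adj z x) with hTdef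
      have mC : ∀ u x, x ∈ C u ↔ (x ∈ L2 ∧ G.Adj u x) := by
        intro u x; rw [hCdef]; simp [Finset.mem_filter, ml2]
      have mT : ∀ u x, x ∈ Tt u ↔ (x ∈ L3 ∧ ∃ z, (z ∈ L2 ∧ G.Adj u z) ∧ G.Adj z x) := by
        intro u x; rw [hTdef]; simp only [Finset.mem_filter, ml3]
        constructor
        · rintro ⟨h1, z, hz, h2⟩; exact ⟨h1, z, (mC u z).mp hz, h2⟩
        · rintro ⟨h1, z, hz, h2⟩; exact ⟨h1, z, (mC u z).mpr hz, h2⟩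
      -- the three families of maximal independent sets
      set A : Finset W := insert v l2 with hAdef
      set B : Finset W := l1 ∪ l3 with hBdef
      have hA : MaxIndep G ↑A := by
        constructor
        · intro a ha b hb hne
          rw [hAdef, Finset.coe_insert, Set.mem_insert_iff] at ha hb
          rcases ha with rfl | ha <;> rcases hb with rfl | hb
          · exact absurd rfl hne
          · exact f_vL2 b ((ml2 b).mp hb)
          · exact fun h => f_vL2 a ((ml2 a).mp ha) (G.adj_symm h)
          · exact f_c a ((ml2 a).mp ha) b ((ml2 b).mp hb)
        · intro x hx
          rw [hAdef, Finset.coe_insert, Set.mem_insert_iff] at hx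
          push_neg at hx
          rcases htot x with rfl | h | h | h
          · exact absurd rfl hx.1
          · exact ⟨v, Finset.mem_coe.mpr (Finset.mem_insert_self v l2), h⟩
          · exact absurd (Finset.mem_coe.mpr ((ml2 x).mpr h)) hx.2
          · obtain ⟨z, hz, hzx⟩ := hcase x h
            exact ⟨z, Finset.mem_coe.mpr (Finset.mem_insert.mpr (Or.inr ((ml2 z).mpr hz))), hzx⟩
      have hB : MaxIndep G ↑B := by
        constructor
        · intro a ha b hb hne
          rw [hBdef, Finset.coe_union, Set.mem_union, Finset.mem_coe, Finset.mem_coe,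
            ml1, ml3] at ha hb
          rcases ha with ha | ha <;> rcases hb with hb | hb
          · exact f_a a ha b hb
          · exact f_L1L3 a ha b hb
          · exact fun h => f_L1L3 b hb a ha (G.adj_symm h)
          · exact f_e a ha b hb
        · intro x hx
          rw [hBdef, Finset.coe_union, Set.mem_union, Finset.mem_coe, Finset.mem_coe,
            ml1, ml3] at hx
          push_neg at hx
          have memB : ∀ y, y ∈ L1 → y ∈ (↑B : Set W) := fun y hy =>
            Finset.mem_coe.mpr (Finset.mem_union_left _ ((ml1 y).mpr hy))
          rcases htot x with rfl | h | h | h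
          · obtain ⟨u0, hu0⟩ := (Set.ncard_pos (Set.toFinite L1)).mp (by omega : 0 < L1.ncard)
            exact ⟨u0, memB u0 hu0, G.adj_symm hu0⟩
          · exact absurd h hx.1
          · obtain ⟨u, hu, hux⟩ := h.2.2
            exact ⟨u, memB u hu, hux⟩
          · exact absurd h hx.2
      have hAB : A.card = B.card := by
        have := hwc ↑A ↑B hA hB
        rwa [Set.ncard_coe_finset, Set.ncard_coe_finset] at this
      -- the modified family for each u ∈ L1
      have hCi : ∀ u ∈ L1, (C u).card ≤ l2.card ∧
          l2.card + 1 = (l2.card - (C u).card) + (Tt u).card + 1 := by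
        intro u hu
        set Ci : Finset W := insert u ((l2 \ C u) ∪ Tt u) with hCidef
        have memCi : ∀ x, x ∈ Ci ↔ (x = u ∨ (x ∈ L2 ∧ ¬ G.Adj u x) ∨ x ∈ Tt u) := by
          intro x
          rw [hCidef]
          simp only [Finset.mem_insert, Finset.mem_union, Finset.mem_sdiff, ml2, mC]
          constructor
          · rintro (rfl | (⟨h1, h2⟩ | h))
            · exact Or.inl rfl
            · exact Or.inr (Or.inl ⟨h1, fun hadj => h2 ⟨h1, hadj⟩⟩)
            · exact Or.inr (Or.inr h)
          · rintro (rfl | (⟨h1, h2⟩ | h))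
            · exact Or.inl rfl
            · exact Or.inr (Or.inl ⟨h1, fun hadj => h2 hadj.2⟩)
            · exact Or.inr (Or.inr h)
        have hCiMI : MaxIndep G ↑Ci := by
          constructor
          · intro a ha b hb hne
            rw [Finset.mem_coe, memCi] at ha hb
            rcases ha with rfl | ha <;> rcases hb with rfl | hb
            · exact absurd rfl hne
            · rcases hb with ⟨hb1, hb2⟩ | hb
              · exact hb2
              · exact f_L1L3 a hu b ((mT a b).mp hb).1
            · rcases ha with ⟨ha1, ha2⟩ | ha
              · exact fun h => ha2 (G.adj_symm h)
              · exact fun h => f_L1L3 b hu a ((mT b a).mp ha).1 (G.adj_symm h)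
            · rcases ha with ⟨ha1, ha2⟩ | ha <;> rcases hb with ⟨hb1, hb2⟩ | hb
              · exact f_c a ha1 b hb1
              · intro h
                obtain ⟨hb3, z, ⟨hz1, hz2⟩, hz3⟩ := (mT u b).mp hb
                have : a = z := f_f b hb3 a ha1 z hz1 h hz3
                exact ha2 (this ▸ hz2)
              · intro h
                obtain ⟨ha3, z, ⟨hz1, hz2⟩, hz3⟩ := (mT u a).mp ha
                have : b = z := f_f a ha3 b hb1 z hz1 (G.adj_symm h) hz3
                exact hb2 (this ▸ hz2)
              · exact f_e a ((mT u a).mp ha).1 b ((mT u b).mp hb).1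
          · intro x hx
            rw [Finset.mem_coe, memCi] at hx
            push_neg at hx
            obtain ⟨hx1, hx2, hx3⟩ := hx
            have memCi' : ∀ y, (y = u ∨ (y ∈ L2 ∧ ¬ G.Adj u y) ∨ y ∈ Tt u) → y ∈ (↑Ci : Set W) :=
              fun y hy => Finset.mem_coe.mpr ((memCi y).mpr hy)
            rcases htot x with rfl | h | h | h
            · exact ⟨u, memCi' u (Or.inl rfl), G.adj_symm hu⟩
            · obtain ⟨z, hz, hxz⟩ := hL2nbr x h
              have hzu : ¬ G.Adj u z := fun hadj => hx1 (f_b z hz u hu x h hadj hxz).symm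
              exact ⟨z, memCi' z (Or.inr (Or.inl ⟨hz, hzu⟩)), G.adj_symm hxz⟩
            · exact ⟨u, memCi' u (Or.inl rfl), hx2 h⟩
            · obtain ⟨z, hz, hzx⟩ := hcase x h
              have hzu : ¬ G.Adj u z := fun hadj =>
                hx3 ((mT u x).mpr ⟨h, z, ⟨hz, hadj⟩, hzx⟩)
              exact ⟨z, memCi' z (Or.inr (Or.inl ⟨hz, hzu⟩)), hzx⟩
        have hACi : A.card = Ci.card := by
          have := hwc ↑A ↑Ci hA hCiMI
          rwa [Set.ncard_coe_finset, Set.ncard_coe_finset] at this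
        have hCsub : C u ⊆ l2 := Finset.filter_subset _ _
        have hTsub : Tt u ⊆ l3 := Finset.filter_subset _ _
        have huCi : u ∉ (l2 \ C u) ∪ Tt u := by
          intro hmem
          rcases Finset.mem_union.mp hmem with h | h
          · exact hL12 u hu ((ml2 u).mp (Finset.mem_sdiff.mp h).1)
          · exact hL13 u hu ((ml3 u).mp (hTsub h))
        have hdisj : Disjoint (l2 \ C u) (Tt u) := by
          rw [Finset.disjoint_left]
          intro x hx1 hx2
          exact hL23 x ((ml2 x).mp (Finset.mem_sdiff.mp hx1).1) ((ml3 x).mp (hTsub hx2))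
        have hvl2 : v ∉ l2 := fun h => hvL2 ((ml2 v).mp h)
        have e1 : A.card = l2.card + 1 := by
          rw [hAdef, Finset.card_insert_of_notMem hvl2]
        have e2 : Ci.card = (l2.card - (C u).card) + (Tt u).card + 1 := by
          rw [hCidef, Finset.card_insert_of_notMem huCi, Finset.card_union_of_disjoint hdisj,
            Finset.card_sdiff_of_subset hCsub]
        exact ⟨Finset.card_le_card hCsub, by omega⟩
      -- partition sums
      have hl2sum : l2.card = ∑ u ∈ l1, (C u).card := by
        have : l2 = l1.biUnion C := by
          ext x
          simp only [Finset.mem_biUnion, ml1, mC, ml2]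
          constructor
          · intro hx
            obtain ⟨u, hu, hux⟩ := hx.2.2
            exact ⟨u, hu, hx, hux⟩
          · rintro ⟨u, hu, hx, hux⟩
            exact hx
        rw [this]
        apply Finset.card_biUnion
        intro u hu u' hu' hne
        rw [Function.onFun, Finset.disjoint_left]
        intro z hz hz'
        obtain ⟨h1, h2⟩ := (mC u z).mp hz
        obtain ⟨h1', h2'⟩ := (mC u' z).mp hz'
        exact hne (f_b z h1 u ((ml1 u).mp hu) u' ((ml1 u').mp hu') h2 h2')
      have hl3sum : l3.card = ∑ u ∈ l1, (Tt u).card := by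
        have : l3 = l1.biUnion Tt := by
          ext x
          simp only [Finset.mem_biUnion, ml1, mT, ml3]
          constructor
          · intro hx
            obtain ⟨z, hz, hzx⟩ := hcase x hx
            obtain ⟨u, hu, huz⟩ := hz.2.2
            exact ⟨u, hu, hx, z, ⟨hz, huz⟩, hzx⟩
          · rintro ⟨u, hu, hx, -⟩
            exact hx
        rw [this]
        apply Finset.card_biUnion
        intro u hu u' hu' hne
        rw [Function.onFun, Finset.disjoint_left]
        intro x hx hx'
        obtain ⟨h1, z, ⟨hz1, hz2⟩, hz3⟩ := (mT u x).mp hx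
        obtain ⟨h1', z', ⟨hz1', hz2'⟩, hz3'⟩ := (mT u' x).mp hx'
        have : z = z' := f_f x h1 z hz1 z' hz1' hz3 hz3'
        subst this
        exact hne (f_b z hz1 u ((ml1 u).mp hu) u' ((ml1 u').mp hu') hz2 hz2')
      have hl23 : l3.card = l2.card := by
        rw [hl3sum, hl2sum]
        apply Finset.sum_congr rfl
        intro u hu
        have := hCi u ((ml1 u).mp hu)
        omega
      have hBcard : B.card = l1.card + l3.card := by
        rw [hBdef]
        apply Finset.card_union_of_disjoint
        rw [Finset.disjoint_left]
        intro x hx1 hx2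
        exact hL13 x ((ml1 x).mp hx1) ((ml3 x).mp hx2)
      have hvl2 : v ∉ l2 := fun h => hvL2 ((ml2 v).mp h)
      have hAcard : A.card = l2.card + 1 := by
        rw [hAdef, Finset.card_insert_of_notMem hvl2]
      have hl1card : 2 ≤ l1.card := by
        rwa [hl1def, ← Set.ncard_eq_toFinset_card']
      omega
    · -- CASE 2: some vertex of L3 has all neighbors in L3; delete its closed nbhd
      push_neg at hcase
      obtain ⟨w, hw, hwnoL2⟩ := hcase
      have hNw : ∀ x : W, G.Adj w x → x ∈ L3 := by
        intro x hadj
        rcases htot x with rfl | hx | hx | hx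
        · exact absurd hadj (fun h => f_vL3 w hw (G.adj_symm h))
        · exact absurd hadj (fun h => f_L1L3 x hx w hw (G.adj_symm h))
        · exact absurd (G.adj_symm hadj) (hwnoL2 x hx)
        · exact hx
      set U : Set W := {x | x ≠ w ∧ ¬ G.Adj w x} with hUdef
      have hwU : w ∉ U := fun h => h.1 rfl
      haveI : Fintype ↥U := Fintype.ofFinite ↥U
      have hUcard : Fintype.card ↥U ≤ n := by
        have h1 : Fintype.card ↥U = U.ncard := by
          rw [← Nat.card_coe_set_eq, Nat.card_eq_fintype_card]
        have h2 : U.ncard < (Set.univ : Set W).ncard := by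
          apply Set.ncard_lt_ncard _ (Set.toFinite _)
          exact ⟨Set.subset_univ U, fun hsub => hwU (hsub (Set.mem_univ w))⟩
        have h3 : (Set.univ : Set W).ncard = Fintype.card W := by
          rw [Set.ncard_univ, Nat.card_eq_fintype_card]
        omega
      set H : SimpleGraph ↥U := G.induce U with hHdef
      have hHadj : ∀ a b : ↥U, H.Adj a b ↔ G.Adj ↑a ↑b := fun a b => Iff.rfl
      have hHg : 8 ≤ H.egirth := by
        rw [le_egirth]
        intro a wk hwk
        have := (le_egirth.mp hg) ↑a (wk.map (Embedding.induce (G := G) U).toHom)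
          (hwk.map Subtype.val_injective)
        exact this.trans_eq (congrArg _ (Walk.length_map _ _))
      -- transfer of neighbor sets
      have himg : ∀ (x : W) (hx : x ∈ U), G.neighborSet x ⊆ U →
          (H.neighborSet ⟨x, hx⟩).ncard = (G.neighborSet x).ncard := by
        intro x hx hsub
        have heq : G.neighborSet x = Subtype.val '' (H.neighborSet ⟨x, hx⟩) := by
          ext y
          constructor
          · intro hy
            exact ⟨⟨y, hsub hy⟩, hy, rfl⟩
          · rintro ⟨z, hz, rfl⟩
            exact hz
        rw [heq, Set.ncard_image_of_injective _ Subtype.val_injective]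
      -- H is well-covered
      have hHwc : WC H := by
        intro S T hS hT
        have lift : ∀ S : Set ↥U, MaxIndep H S →
            MaxIndep G (insert w (Subtype.val '' S)) ∧
            (insert w (Subtype.val '' S)).ncard = S.ncard + 1 := by
          intro S hS
          have hwim : w ∉ Subtype.val '' S := by
            rintro ⟨z, -, hz⟩; exact hwU (hz ▸ z.2)
          refine ⟨⟨?_, ?_⟩, ?_⟩
          · intro a ha b hb hne
            rcases ha with rfl | ⟨a', ha', rfl⟩ <;> rcases hb with rfl | ⟨b', hb', rfl⟩
            · exact absurd rfl hne
            · exact fun h => b'.2.2 h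
            · exact fun h => a'.2.2 (G.adj_symm h)
            · exact fun h => hS.1 ha' hb' (fun hh => hne (congrArg _ hh)) h
          · intro x hx
            by_cases hxw : G.Adj w x
            · exact ⟨w, Set.mem_insert _ _, hxw⟩
            · have hxU : x ∈ U := ⟨fun h => hx (h ▸ Set.mem_insert _ _), hxw⟩
              have hxS : (⟨x, hxU⟩ : ↥U) ∉ S := fun h =>
                hx (Set.mem_insert_iff.mpr (Or.inr ⟨_, h, rfl⟩))
              obtain ⟨m, hm, hadj⟩ := hS.2 _ hxS
              exact ⟨↑m, Set.mem_insert_iff.mpr (Or.inr ⟨m, hm, rfl⟩), hadj⟩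
          · rw [Set.ncard_insert_of_notMem hwim (Set.toFinite _),
              Set.ncard_image_of_injective _ Subtype.val_injective]
        have h1 := (lift S hS)
        have h2 := (lift T hT)
        have := hwc _ _ h1.1 h2.1
        omega
      -- v lives in U and keeps its degree
      have hL1U : L1 ⊆ U := by
        intro u hu
        refine ⟨(ne13 u hu w hw), fun h => hL13 u hu (hNw u h)⟩
      have hvU : v ∈ U := ⟨nev3 w hw, fun h => hvL3 (hNw v h)⟩
      have hvdeg : 2 ≤ (H.neighborSet ⟨v, hvU⟩).ncard := by
        rw [himg v hvU hL1U]; exact hv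
      obtain ⟨u', hadj', hdeg'⟩ := ih ↥U H hUcard hHg hHwc ⟨v, hvU⟩ hvdeg
      have huL1 : (↑u' : W) ∈ L1 := hadj'
      have hNuU : G.neighborSet ↑u' ⊆ U := by
        intro z hz
        rcases htot z with rfl | hzz | hzz | hzz
        · exact hvU
        · exact absurd hz (f_a _ huL1 _ hzz)
        · refine ⟨(ne23 z hzz w hw), fun h => hL23 z hzz (hNw z h)⟩
        · exact absurd hz (f_L1L3 _ huL1 _ hzz)
      have : (G.neighborSet ↑u').ncard = 1 := by rw [← himg _ u'.2 hNuU]; exact hdeg'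
      exact hleaf ↑u' huL1 this

lemma deg_ncard (G : SimpleGraph V) [DecidableRel G.Adj] (v : V) :
    (G.neighborSet v).ncard = G.degree v := by
  rw [← card_neighborSet_eq_degree, Set.ncard_eq_toFinset_card', Set.toFinset_card]

end FH

open FH

/-- Finbow–Hartnell: a connected well-covered graph with girth at least 8 and at least
two vertices has its pendant edges forming a perfect matching. -/
theorem pendant_matching_of_wellCovered
    (G : SimpleGraph V) [DecidableRel G.Adj]
    (hconn : G.Connected) (hgirth : 8 ≤ G.egirth) (hcard : 2 ≤ Fintype.card V)
    (hwc : ∀ S T : Set V,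
      G.IsIndepSet' S → (∀ S', G.IsIndepSet' S' → S ⊆ S' → S = S') →
      G.IsIndepSet' T → (∀ T', G.IsIndepSet' T' → T ⊆ T' → T = T') →
      S.ncard = T.ncard) :
    ∀ v : V, ∃! e, e ∈ pendantEdges G ∧ v ∈ e := by
  classical
  have hWC : WC G := fun S T hS hT =>
    hwc S T hS.1 (hS.eqForm) hT.1 (hT.eqForm)
  -- every vertex has a neighbor
  have hdegpos : ∀ v : V, 0 < G.degree v := by
    intro v
    obtain ⟨w, hw⟩ := Fintype.exists_ne_of_one_lt_card (by omega) v
    obtain ⟨p⟩ := hconn v w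
    rw [G.degree_pos_iff_exists_adj]
    cases p with
    | nil => exact absurd rfl hw
    | cons h _ => exact ⟨_, h⟩
  -- a vertex has at most one leaf neighbor
  have huniq : ∀ v l₁ l₂ : V, G.Adj v l₁ → G.Adj v l₂ →
      G.degree l₁ = 1 → G.degree l₂ = 1 → l₁ = l₂ := by
    intro v l₁ l₂ h1 h2 d1 d2
    by_contra hne
    have hN : ∀ (l : V), G.Adj v l → G.degree l = 1 → ∀ x, G.Adj l x → x = v := by
      intro l hl dl x hx
      obtain ⟨u, hu⟩ := Finset.card_eq_one.mp (dl ▸ rfl : (G.neighborFinset l).card = 1)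
      have hxu : x = u := by
        have := (G.mem_neighborFinset l x).mpr hx
        rw [hu] at this; simpa using this
      have hvu : v = u := by
        have := (G.mem_neighborFinset l v).mpr (G.adj_symm hl)
        rw [hu] at this; simpa using this
      rw [hxu, hvu]
    obtain ⟨M, hvM, hM⟩ := exists_maxIndep_superset G {v} (Set.pairwise_singleton _ _)
    have hvM' : v ∈ M := hvM rfl
    have hl1M : l₁ ∉ M := fun h => hM.1 hvM' h h1.ne h1
    have hl2M : l₂ ∉ M := fun h => hM.1 hvM' h h2.ne h2
    set S' : Set V := insert l₁ (insert l₂ (M \ {v})) with hS'def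
    have hS'ind : G.IsIndepSet' S' := by
      intro a ha b hb hab
      have key : ∀ x y : V, x = l₁ ∨ x = l₂ → y ∈ M \ {v} → ¬ G.Adj x y := by
        rintro x y (rfl | rfl) hy hadj
        · exact hy.2 (hN x h1 d1 y hadj)
        · exact hy.2 (hN x h2 d2 y hadj)
      have h12 : ¬ G.Adj l₁ l₂ := fun h =>
        G.irrefl ((hN l₁ h1 d1 l₂ h) ▸ h2)
      rcases ha with rfl | rfl | ha <;> rcases hb with rfl | rfl | hb
      · exact absurd rfl hab
      · exact h12
      · exact key a b (Or.inl rfl) hb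
      · exact fun h => h12 (G.adj_symm h)
      · exact absurd rfl hab
      · exact key a b (Or.inr rfl) hb
      · exact fun h => key b a (Or.inl rfl) ha (G.adj_symm h)
      · exact fun h => key b a (Or.inr rfl) ha (G.adj_symm h)
      · exact hM.1 ha.1 hb.1 hab
    obtain ⟨M'', hsub'', hM''⟩ := exists_maxIndep_superset G S' hS'ind
    have hcards : S'.ncard = M.ncard + 1 := by
      have h2' : l₂ ∉ M \ {v} := fun h => hl2M h.1
      have h1' : l₁ ∉ insert l₂ (M \ {v}) := by
        intro h
        rcases h with h | h
        · exact hne h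
        · exact hl1M h.1
      rw [hS'def, Set.ncard_insert_of_notMem h1' (Set.toFinite _),
        Set.ncard_insert_of_notMem h2' (Set.toFinite _),
        Set.ncard_diff_singleton_of_mem hvM']
      have : 0 < M.ncard := (Set.ncard_pos (Set.toFinite _)).mpr ⟨v, hvM'⟩
      omega
    have hMM : M''.ncard = M.ncard := hWC M'' M hM'' hM
    have : S'.ncard ≤ M''.ncard := Set.ncard_le_ncard hsub'' (Set.toFinite _)
    omega
  -- assembly
  intro v
  by_cases hdeg : G.degree v = 1
  · obtain ⟨u, hu⟩ := Finset.card_eq_one.mp (hdeg ▸ rfl : (G.neighborFinset v).card = 1)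
    have hvu : G.Adj v u := by
      have : u ∈ G.neighborFinset v := by rw [hu]; simp
      exact (G.mem_neighborFinset v u).mp this
    have huniqnbr : ∀ x, G.Adj v x → x = u := by
      intro x hx
      have := (G.mem_neighborFinset v x).mpr hx
      rw [hu] at this; simpa using this
    refine ⟨s(v, u), ⟨⟨G.mem_edgeSet.mpr hvu, v, by simp, hdeg⟩, by simp⟩, ?_⟩
    rintro e ⟨⟨heE, -⟩, hve⟩
    obtain ⟨x, rfl⟩ := Sym2.mem_iff_exists.mp hve
    rw [G.mem_edgeSet] at heE
    rw [huniqnbr x heE]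
  · have hdeg2 : 2 ≤ (G.neighborSet v).ncard := by
      rw [deg_ncard]
      have := hdegpos v
      omega
    obtain ⟨u, hvu, hu1⟩ := key (Fintype.card V) V G le_rfl hgirth hWC v hdeg2
    rw [deg_ncard] at hu1
    refine ⟨s(v, u), ⟨⟨G.mem_edgeSet.mpr hvu, u, by simp, hu1⟩, by simp⟩, ?_⟩
    rintro e ⟨⟨heE, z, hze, hz1⟩, hve⟩
    obtain ⟨x, rfl⟩ := Sym2.mem_iff_exists.mp hve
    rw [G.mem_edgeSet] at heE
    rcases Sym2.mem_iff.mp hze with rfl | rfl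
    · exact absurd hz1 hdeg
    · rw [huniq v z u heE hvu hz1 hu1]
end
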